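/- arXiv:1404.3228 — 2 statements merged into one kernel-verified Lean document; each statement's English description precedes it below -/
import Mathlib

section
/- The map ψ : 𝕊 → 𝕊̄ defined by ψ(0) = (0,0,0,…) and ψ((k,a)) = (∞,…,∞, a, 0, 0, …) (with ∞ in positions 0,…,k−1 and a in position k) is a homeomorphism from 𝕊 with the order topology onto 𝕊̄ with the subspace topology inherited from the product topology on [0,∞]^ℕ₀. -/
open scoped ENNReal

/-- The parameter space `𝕊 = {0} ∪ (ℕ₀ × (0,∞])`, realized as a subtype of the
lexicographic product `ℕ ×ₗ ℝ≥0∞`: the pair `(0,0)` represents `0 ∈ 𝕊`, and the pairs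
`(i,t)` with `t > 0` represent the elements of `ℕ₀ × (0,∞]`.  The induced subtype
order is exactly the order of the paper: `0` is the least element, and
`(i,t) < (j,s)` iff `i < j`, or `i = j` and `t < s`. -/
abbrev Sp : Type :=
  {p : ℕ ×ₗ ℝ≥0∞ // ((ofLex p).1 = 0 ∧ (ofLex p).2 = 0) ∨ 0 < (ofLex p).2}

/-- The zero element of `𝕊`. -/
def sZero : Sp := ⟨toLex (0, 0), Or.inl ⟨rfl, rfl⟩⟩

/-- The element `(i,t)` of `𝕊`, for a level `i ∈ ℕ₀` and real part `t ∈ (0,∞]`. -/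
def sNode (i : ℕ) (t : ℝ≥0∞) (ht : 0 < t) : Sp := ⟨toLex (i, t), Or.inr ht⟩

/-- The level `ℒ(x)` of an element of `𝕊` (conventionally `0` on the zero element). -/
def sLevel (x : Sp) : ℕ := (ofLex x.val).1

/-- The real part `ℛ(x)` of an element of `𝕊` (equal to `0` exactly on the zero element). -/
def sRe (x : Sp) : ℝ≥0∞ := (ofLex x.val).2

theorem sNode_ne_sZero {i : ℕ} {t : ℝ≥0∞} (ht : 0 < t) : sNode i t ht ≠ sZero :=
  fun h => ht.ne' (congrArg sRe h)

/-- `𝕊` carries the order topology. -/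
instance : TopologicalSpace Sp := Preorder.topology Sp

instance : OrderTopology Sp := ⟨rfl⟩

/-- The map `ψ : 𝕊 → [0,∞]^ℕ₀`, sending `0` to the zero sequence and `(k,a)` to the
sequence with `∞` in positions `0,…,k−1`, `a` in position `k`, and `0` afterwards. -/
noncomputable def sPsi (x : Sp) : ℕ → ℝ≥0∞ := fun i =>
  if sRe x = 0 then 0
  else if i < sLevel x then ∞
  else if i = sLevel x then sRe x
  else 0

/-- The set `𝕊̄ ⊆ [0,∞]^ℕ₀` of sequences which are either identically `0`, or equal
to `∞` before some index `k`, positive at `k`, and `0` after `k`. -/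
def sBar : Set (ℕ → ℝ≥0∞) :=
  {x | (∀ i, x i = 0) ∨
    ∃ k : ℕ, (∀ i < k, x i = ∞) ∧ 0 < x k ∧ ∀ i > k, x i = 0}

open Set TopologicalSpace

lemma sp_lt_iff {x y : Sp} :
    x < y ↔ sLevel x < sLevel y ∨ sLevel x = sLevel y ∧ sRe x < sRe y := by
  rw [← Subtype.coe_lt_coe]
  have := (Prod.Lex.lt_iff : x.val < y.val ↔ _)
  simpa [sLevel, sRe] using this

lemma sLevel_eq_zero {x : Sp} (h : sRe x = 0) : sLevel x = 0 :=
  (x.property.resolve_right (fun h' => h'.ne' h)).1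

lemma eq_sZero {x : Sp} (h : sRe x = 0) : x = sZero := by
  apply Subtype.ext
  have : ofLex x.val = ((0 : ℕ), (0 : ℝ≥0∞)) := Prod.ext (sLevel_eq_zero h) h
  exact this

lemma sPsi_apply (x : Sp) (i : ℕ) : sPsi x i =
    if sRe x = 0 then 0
    else if i < sLevel x then ∞
    else if i = sLevel x then sRe x
    else 0 := rfl

lemma ltA {y x : Sp} (hb : sRe y ≠ ∞) : y < x ↔ sRe y < sPsi x (sLevel y) := by
  rw [sp_lt_iff, sPsi_apply]
  by_cases h0 : sRe x = 0
  · rw [if_pos h0]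
    have hx : sLevel x = 0 := sLevel_eq_zero h0
    simp [hx, h0]
  · rw [if_neg h0]
    rcases lt_trichotomy (sLevel y) (sLevel x) with h | h | h
    · simp [h, hb.lt_top]
    · simp [h]
    · have h1 : ¬ sLevel y < sLevel x := by omega
      have h2 : ¬ sLevel y = sLevel x := by omega
      simp [h1, h2]

lemma ltAtop {y x : Sp} (hb : sRe y = ∞) : y < x ↔ 0 < sPsi x (sLevel y + 1) := by
  rw [sp_lt_iff, sPsi_apply, hb]
  by_cases h0 : sRe x = 0
  · rw [if_pos h0]
    have hx : sLevel x = 0 := sLevel_eq_zero h0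
    simp [hx, h0]
  · rw [if_neg h0]
    have hx : 0 < sRe x := pos_iff_ne_zero.mpr h0
    rcases lt_trichotomy (sLevel y + 1) (sLevel x) with h | h | h
    · simp [h, (by omega : sLevel y < sLevel x)]
    · have h1 : ¬ sLevel y + 1 < sLevel x := by omega
      simp [h1, h, hx, (by omega : sLevel y < sLevel x)]
    · have h1 : ¬ sLevel y + 1 < sLevel x := by omega
      have h2 : ¬ sLevel y + 1 = sLevel x := by omega
      have h3 : ¬ sLevel y < sLevel x := by omega
      simp [h1, h2, h3, not_top_lt]

lemma ltB {y x : Sp} (hy : y ≠ sZero) : x < y ↔ sPsi x (sLevel y) < sRe y := by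
  have hb : 0 < sRe y := by
    rcases y.property with ⟨h1, h2⟩ | h
    · exact absurd (eq_sZero h2) hy
    · exact h
  rw [sp_lt_iff, sPsi_apply]
  by_cases h0 : sRe x = 0
  · rw [if_pos h0]
    have hx : sLevel x = 0 := sLevel_eq_zero h0
    rcases Nat.eq_zero_or_pos (sLevel y) with h | h
    · simp [hx, h, hb, h0]
    · simp [hx, h, hb, h0]
  · rw [if_neg h0]
    rcases lt_trichotomy (sLevel y) (sLevel x) with h | h | h
    · have h1 : ¬ sLevel x < sLevel y := by omega
      have h2 : ¬ sLevel x = sLevel y := by omega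
      simp [h, h1, h2, not_top_lt]
    · have h1 : ¬ sLevel y < sLevel x := by omega
      simp [h1, h.symm]
    · have h1 : ¬ sLevel y < sLevel x := by omega
      have h2 : ¬ sLevel y = sLevel x := by omega
      simp [h, h1, h2, hb]

lemma sPsi_mem_sBar (x : Sp) : sPsi x ∈ sBar := by
  by_cases h0 : sRe x = 0
  · left
    intro i
    simp [sPsi_apply, h0]
  · right
    refine ⟨sLevel x, fun i hi => ?_, ?_, fun i hi => ?_⟩
    · simp [sPsi_apply, h0, hi]
    · simp [sPsi_apply, h0, pos_iff_ne_zero.mpr h0]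
    · rw [sPsi_apply, if_neg h0, if_neg (by omega), if_neg (by omega)]

lemma sPsi_ne_of_lt {x y : Sp} (h : x < y) : sPsi x ≠ sPsi y := by
  intro he
  by_cases hx : sRe x = ∞
  · have h1 : 0 < sPsi y (sLevel x + 1) := (ltAtop hx).mp h
    have h2 : ¬ 0 < sPsi x (sLevel x + 1) := fun h' => lt_irrefl x ((ltAtop hx).mpr h')
    rw [he] at h2; exact h2 h1
  · have h1 : sRe x < sPsi y (sLevel x) := (ltA hx).mp h
    have h2 : ¬ sRe x < sPsi x (sLevel x) := fun h' => lt_irrefl x ((ltA hx).mpr h')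
    rw [he] at h2; exact h2 h1

lemma sPsi_injective : Function.Injective sPsi := by
  intro x y h
  by_contra hne
  rcases lt_or_gt_of_ne hne with hlt | hlt
  · exact sPsi_ne_of_lt hlt h
  · exact sPsi_ne_of_lt hlt h.symm

lemma sPsi_surjective : ∀ s ∈ sBar, ∃ x : Sp, sPsi x = s := by
  rintro s (hs | ⟨k, h1, h2, h3⟩)
  · refine ⟨sZero, funext fun i => ?_⟩
    rw [hs i]
    simp [sPsi_apply, sRe, sZero]
  · refine ⟨sNode k (s k) h2, funext fun i => ?_⟩
    have hk : sRe (sNode k (s k) h2) = s k := rfl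
    have hl : sLevel (sNode k (s k) h2) = k := rfl
    rw [sPsi_apply, hk, hl, if_neg h2.ne']
    rcases lt_trichotomy i k with h | h | h
    · rw [if_pos h, h1 i h]
    · rw [if_neg (by omega), if_pos h, h]
    · rw [if_neg (by omega), if_neg (by omega), h3 i h]

noncomputable def sEquiv : Sp ≃ sBar :=
  Equiv.ofBijective (fun x => ⟨sPsi x, sPsi_mem_sBar x⟩)
    ⟨fun a b h => sPsi_injective (congrArg Subtype.val h),
     fun s => by
      obtain ⟨x, hx⟩ := sPsi_surjective s s.property
      exact ⟨x, Subtype.ext hx⟩⟩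

lemma sEquiv_val (x : Sp) : (sEquiv x : ℕ → ℝ≥0∞) = sPsi x := rfl

lemma sPsi_symm (s : sBar) : sPsi (sEquiv.symm s) = (s : ℕ → ℝ≥0∞) := by
  have := sEquiv.apply_symm_apply s
  exact congrArg Subtype.val this

lemma isOpen_gt_coord (j : ℕ) (c : ℝ≥0∞) :
    IsOpen {s : sBar | c < (s : ℕ → ℝ≥0∞) j} :=
  isOpen_Ioi.preimage ((continuous_apply j).comp continuous_subtype_val)

lemma isOpen_lt_coord (j : ℕ) (c : ℝ≥0∞) :
    IsOpen {s : sBar | (s : ℕ → ℝ≥0∞) j < c} :=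
  isOpen_Iio.preimage ((continuous_apply j).comp continuous_subtype_val)

lemma not_lt_sZero (x : Sp) : ¬ x < sZero := by
  rw [sp_lt_iff]
  rintro (h | ⟨h, h'⟩)
  · exact Nat.not_lt_zero _ h
  · exact (ENNReal.not_lt_zero h')

lemma continuous_sEquiv : Continuous (sEquiv : Sp → sBar) := by
  apply Continuous.subtype_mk
  apply continuous_pi
  intro i
  rw [OrderTopology.topology_eq_generate_intervals (α := ℝ≥0∞),
    continuous_generateFrom_iff]
  rintro u ⟨c, rfl | rfl⟩
  · by_cases hc : c = ∞
    · have : (fun x => sPsi x i) ⁻¹' Ioi c = ∅ := by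
        ext x
        simp [hc, not_top_lt]
      rw [this]; exact isOpen_empty
    · by_cases hc0 : c = 0
      · cases i with
        | zero =>
          have : (fun x => sPsi x 0) ⁻¹' Ioi c = Ioi sZero := by
            ext x
            simp only [mem_preimage, mem_Ioi, hc0]
            exact ((ltA (y := sZero) (x := x) (by exact ENNReal.zero_ne_top))).symm
          rw [this]; exact isOpen_Ioi
        | succ j =>
          have : (fun x => sPsi x (j + 1)) ⁻¹' Ioi c = Ioi (sNode j ∞ (by simp)) := by
            ext x
            simp only [mem_preimage, mem_Ioi, hc0]
            exact ((ltAtop (y := sNode j ∞ (by simp)) (x := x) rfl)).symm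
          rw [this]; exact isOpen_Ioi
      · have : (fun x => sPsi x i) ⁻¹' Ioi c = Ioi (sNode i c (pos_iff_ne_zero.mpr hc0)) := by
          ext x
          simp only [mem_preimage, mem_Ioi]
          exact ((ltA (y := sNode i c (pos_iff_ne_zero.mpr hc0)) (x := x) hc)).symm
        rw [this]; exact isOpen_Ioi
  · by_cases hc0 : c = 0
    · have : (fun x => sPsi x i) ⁻¹' Iio c = ∅ := by
        ext x
        simp [hc0]
      rw [this]; exact isOpen_empty
    · have : (fun x => sPsi x i) ⁻¹' Iio c = Iio (sNode i c (pos_iff_ne_zero.mpr hc0)) := by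
        ext x
        simp only [mem_preimage, mem_Iio]
        exact ((ltB (y := sNode i c (pos_iff_ne_zero.mpr hc0)) (x := x)
          (sNode_ne_sZero _))).symm
      rw [this]; exact isOpen_Iio

lemma continuous_sEquiv_symm : Continuous (sEquiv.symm : sBar → Sp) := by
  rw [OrderTopology.topology_eq_generate_intervals (α := Sp),
    continuous_generateFrom_iff]
  rintro u ⟨y, rfl | rfl⟩
  · by_cases hb : sRe y = ∞
    · have : (sEquiv.symm ⁻¹' Ioi y) = {s : sBar | 0 < (s : ℕ → ℝ≥0∞) (sLevel y + 1)} := by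
        ext s
        simp only [mem_preimage, mem_Ioi, mem_setOf_eq]
        rw [ltAtop hb, sPsi_symm]
      rw [this]; exact isOpen_gt_coord _ _
    · have : (sEquiv.symm ⁻¹' Ioi y) = {s : sBar | sRe y < (s : ℕ → ℝ≥0∞) (sLevel y)} := by
        ext s
        simp only [mem_preimage, mem_Ioi, mem_setOf_eq]
        rw [ltA hb, sPsi_symm]
      rw [this]; exact isOpen_gt_coord _ _
  · by_cases hy : y = sZero
    · have : (sEquiv.symm ⁻¹' Iio y) = ∅ := by
        ext s
        simp only [mem_preimage, mem_Iio, mem_empty_iff_false, iff_false, hy]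
        exact not_lt_sZero _
      rw [this]; exact isOpen_empty
    · have : (sEquiv.symm ⁻¹' Iio y) = {s : sBar | (s : ℕ → ℝ≥0∞) (sLevel y) < sRe y} := by
        ext s
        simp only [mem_preimage, mem_Iio, mem_setOf_eq]
        rw [ltB hy, sPsi_symm]
      rw [this]; exact isOpen_lt_coord _ _

/-- `ψ` is a homeomorphism from `𝕊` with the order topology onto `𝕊̄` with the
subspace topology inherited from the product topology on `[0,∞]^ℕ₀`. -/
theorem stmt9 :
    ∃ e : Sp ≃ₜ sBar, ∀ x : Sp, (e x : ℕ → ℝ≥0∞) = sPsi x := by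
  exact ⟨{ toEquiv := sEquiv, continuous_toFun := continuous_sEquiv,
           continuous_invFun := continuous_sEquiv_symm }, fun x => rfl⟩
end

section
/- The projectivization ℙ𝕊² of 𝕊² is not a Hausdorff topological space. -/
open scoped ENNReal

/-- Scalar multiplication by an extended real `λ`: `λ·(i,t) = (i, λ·t)` and `λ·0 = 0`
(intended for positive scalars `λ ∈ (0,∞]`). -/
noncomputable def sSMul (l : ℝ≥0∞) (x : Sp) : Sp :=
  if hx : sRe x = 0 then sZero
  else if hl : l = 0 then sZero
  else sNode (sLevel x) (l * sRe x) (ENNReal.mul_pos hl hx)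

/-- `𝕊² ∖ {(0,0)}`. -/
abbrev SV2 : Type := {v : Sp × Sp // v ≠ (sZero, sZero)}

/-- Projective equivalence on `𝕊² ∖ {(0,0)}`: `w = λ·v` coordinatewise for some real
`λ ∈ (0,∞)` (i.e. some positive finite extended real). -/
def projRel2 (v w : SV2) : Prop :=
  ∃ l : ℝ≥0∞, 0 < l ∧ l ≠ ∞ ∧
    w.val.1 = sSMul l v.val.1 ∧ w.val.2 = sSMul l v.val.2

/-- The projectivization `ℙ𝕊²`, with the quotient topology. -/
abbrev PS2 : Type := Quot projRel2

/-- The point `((i,s),(j,t))` of `𝕊² ∖ {(0,0)}`. -/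
def pt2 (i j : ℕ) (s t : ℝ≥0∞) (hs : 0 < s) (ht : 0 < t) : SV2 :=
  ⟨(sNode i s hs, sNode j t ht), fun h => sNode_ne_sZero hs (congrArg Prod.fst h)⟩

section aux
open Filter Topology

lemma npos (n : ℕ) : (0 : ℝ≥0∞) < n + 1 := lt_of_lt_of_le one_pos le_add_self

noncomputable def xN (n : ℕ) : Sp := sNode 0 (n + 1) (npos n)

noncomputable def xInf : Sp := sNode 0 ∞ (by norm_num)

lemma sp_lt_iff_s12 {a b : Sp} : a < b ↔ a.val < b.val := Iff.rfl

lemma lex_lt_iff (a b : ℕ ×ₗ ℝ≥0∞) :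
    a < b ↔ (ofLex a).1 < (ofLex b).1 ∨
      (ofLex a).1 = (ofLex b).1 ∧ (ofLex a).2 < (ofLex b).2 :=
  Prod.Lex.lt_iff

lemma tend_xN : Tendsto xN atTop (𝓝 xInf) := by
  rw [tendsto_order]
  constructor
  · intro a ha
    rw [sp_lt_iff_s12, lex_lt_iff] at ha
    rcases ha with h | ⟨h1, h2⟩
    · exact absurd h (Nat.not_lt_zero _)
    · have h2' : (ofLex a.val).2 ≠ ∞ := h2.ne
      obtain ⟨n, hn⟩ := ENNReal.exists_nat_gt h2'
      filter_upwards [eventually_ge_atTop n] with m hm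
      rw [sp_lt_iff_s12, lex_lt_iff]
      right
      refine ⟨h1, hn.trans_le ?_⟩
      calc (n : ℝ≥0∞) ≤ m := by exact_mod_cast hm
        _ ≤ m + 1 := le_self_add
  · intro b hb
    rcases (lex_lt_iff xInf.val b.val).mp hb with h | ⟨h1, h2⟩
    · refine Filter.Eventually.of_forall fun m => ?_
      rw [sp_lt_iff_s12, lex_lt_iff]
      exact Or.inl h
    · exact absurd h2 (by simp [xInf, sNode])

noncomputable def wN (n : ℕ) : SV2 := pt2 0 0 (n + 1) (n + 1) (npos n) (npos n)

noncomputable def vInf : SV2 := pt2 0 0 ∞ ∞ (by norm_num) (by norm_num)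

noncomputable def v1 : SV2 := pt2 0 0 1 1 one_pos one_pos

lemma tend_wN : Tendsto wN atTop (𝓝 vInf) := by
  rw [tendsto_subtype_rng]
  exact (tend_xN.prodMk_nhds tend_xN :)

lemma sRe_inv (v w : SV2) (h : projRel2 v w) :
    (sRe v.val.1 = ∞) = (sRe w.val.1 = ∞) := by
  obtain ⟨l, hl0, hltop, h1, _⟩ := h
  apply propext
  rw [h1]
  unfold sSMul
  split_ifs with hx hl
  · simp only [sRe] at hx
    simp [sZero, sRe, hx]
  · exact absurd hl hl0.ne'
  · simp [sNode, sRe, ENNReal.mul_eq_top, hltop, hl0.ne', hl, hx]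

lemma rel_v1_wN (n : ℕ) : projRel2 v1 (wN n) := by
  refine ⟨n + 1, npos n, by simp, ?_, ?_⟩ <;>
  · show sNode 0 ((n:ℝ≥0∞) + 1) (npos n) = sSMul _ _
    unfold sSMul
    rw [dif_neg (by norm_num [v1, pt2, sNode, sRe]), dif_neg (npos n).ne']
    apply Subtype.ext
    show toLex _ = toLex _
    congr 1
    simp [v1, pt2, sNode, sRe, sLevel]

end aux

/-- The projectivization `ℙ𝕊²` of `𝕊²` is not a Hausdorff topological space. -/
theorem stmt12 : ¬ T2Space PS2 := by
  intro h
  have hne : Quot.mk projRel2 vInf ≠ Quot.mk projRel2 v1 := by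
    intro heq
    have := congrArg (Quot.lift (fun v : SV2 => sRe v.val.1 = ∞) sRe_inv) heq
    simp only [Quot.lift_mk] at this
    simp [vInf, v1, pt2, sNode, sRe] at this
  obtain ⟨U, V, hU, hV, hPU, hQV, hdisj⟩ := t2_separation hne
  have hUopen : IsOpen (Quot.mk projRel2 ⁻¹' U) := hU.preimage continuous_quot_mk
  have hmem : ∀ᶠ n in Filter.atTop, wN n ∈ Quot.mk projRel2 ⁻¹' U :=
    tend_wN.eventually_mem (hUopen.mem_nhds hPU)
  obtain ⟨n, hn⟩ := hmem.exists
  have hq : Quot.mk projRel2 (wN n) = Quot.mk projRel2 v1 := (Quot.sound (rel_v1_wN n)).symm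
  have hnV : wN n ∈ Quot.mk projRel2 ⁻¹' V := by
    simp only [Set.mem_preimage, hq]
    exact hQV
  exact hdisj.le_bot ⟨hn, hnV⟩
end
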